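/- arXiv:2101.09661 — 2 statements merged into one kernel-verified Lean document; each statement's English description precedes it below -/
import Mathlib

section
/- Let X be a real linear n-normed space, W a subspace of X, and x₀ ∈ X with {x₀, b₂, ..., bₙ} linearly independent and d := inf_{x ∈ W} ‖x₀ - x, b₂, ..., bₙ‖ > 0. Then there exists a bounded b-linear functional T on X × ⟨b₂⟩ × ... × ⟨bₙ⟩ such that T(x₀, b₂, ..., bₙ) = 1, T(x, b₂, ..., bₙ) = 0 for all x ∈ W, and ‖T‖ = 1/d. -/
open Function Filter Topology

/-- An `n`-norm on a real vector space `X` (axioms N1-N4). -/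
structure NNorm (n : ℕ) (X : Type*) [AddCommGroup X] [Module ℝ X] where
  toFun : (Fin n → X) → ℝ
  eq_zero_iff : ∀ v : Fin n → X, toFun v = 0 ↔ ¬ LinearIndependent ℝ v
  perm_invariant : ∀ (σ : Equiv.Perm (Fin n)) (v : Fin n → X), toFun (v ∘ σ) = toFun v
  smul_eq : ∀ (α : ℝ) (v : Fin n → X) (i : Fin n),
      toFun (Function.update v i (α • v i)) = |α| * toFun v
  add_le : ∀ (v : Fin n → X) (i : Fin n) (x y : X),
      toFun (Function.update v i (x + y)) ≤
        toFun (Function.update v i x) + toFun (Function.update v i y)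

variable {n : ℕ} {X : Type*} [AddCommGroup X] [Module ℝ X]

/-- The seminorm `x ↦ ‖x, b₂, …, bₙ‖` obtained by fixing the vectors `b` in all slots
but the first. -/
noncomputable def bsem (N : NNorm (n + 1) X) (b : Fin (n + 1) → X) (x : X) : ℝ :=
  N.toFun (Function.update b 0 x)

section Generic

variable {V : Type*} [AddCommGroup V] [Module ℝ V]

/-- A `b`-linear functional: additive and homogeneous in its first argument. -/
def IsBLinear (T : V → ℝ) : Prop :=
  (∀ x y : V, T (x + y) = T x + T y) ∧ ∀ (k : ℝ) (x : V), T (k • x) = k * T x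

/-- A bounded `b`-linear functional with respect to a seminorm `p`. -/
def IsBddBLinearP (p : V → ℝ) (T : V → ℝ) : Prop :=
  IsBLinear T ∧ ∃ M > 0, ∀ x : V, |T x| ≤ M * p x

/-- The norm of a bounded `b`-linear functional with respect to a seminorm `p`. -/
noncomputable def bnormP (p : V → ℝ) (T : V → ℝ) : ℝ :=
  sInf {M : ℝ | 0 < M ∧ ∀ x : V, |T x| ≤ M * p x}

end Generic

/-- A bounded `b`-linear functional on `X × ⟨b₂⟩ × ⋯ × ⟨bₙ⟩`. -/
def IsBddBLinear (N : NNorm (n + 1) X) (b : Fin (n + 1) → X) (T : X → ℝ) : Prop :=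
  IsBddBLinearP (bsem N b) T

/-- The norm of a bounded `b`-linear functional on `X × ⟨b₂⟩ × ⋯ × ⟨bₙ⟩`. -/
noncomputable def bnorm (N : NNorm (n + 1) X) (b : Fin (n + 1) → X) (T : X → ℝ) : ℝ :=
  bnormP (bsem N b) T

/-- Convergence of a sequence in a linear `n`-normed space. -/
def NConv (N : NNorm (n + 1) X) (u : ℕ → X) (x : X) : Prop :=
  ∀ v : Fin (n + 1) → X,
    Tendsto (fun k => N.toFun (Function.update v 0 (u k - x))) atTop (nhds 0)

/-- A subspace is closed if it contains all limits of its convergent sequences. -/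
def IsClosedSub (N : NNorm (n + 1) X) (W : Submodule ℝ X) : Prop :=
  ∀ u : ℕ → X, (∀ k, u k ∈ W) → ∀ x : X, NConv N u x → x ∈ W

/-- `b`-weak convergence of a sequence. -/
def BWeakConv (N : NNorm (n + 1) X) (b : Fin (n + 1) → X) (u : ℕ → X) (x : X) : Prop :=
  ∀ T : X → ℝ, IsBddBLinear N b T →
    Tendsto (fun k => T (u k)) atTop (nhds (T x))

theorem stmt2 (N : NNorm (n + 1) X) (b : Fin (n + 1) → X)
    (hdim : ↑(n + 1) ≤ Module.rank ℝ X) (W : Submodule ℝ X) (x₀ : X)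
    (hli : LinearIndependent ℝ (Function.update b 0 x₀)) (d : ℝ)
    (hdinf : d = sInf ((fun w => bsem N b (x₀ - w)) '' (W : Set X))) (hd : 0 < d) :
    ∃ T : X → ℝ, IsBddBLinear N b T ∧ T x₀ = 1 ∧ (∀ x ∈ W, T x = 0) ∧
      bnorm N b T = 1 / d := by
  classical
  set p : X → ℝ := bsem N b with hp
  have hpadd : ∀ x y, p (x + y) ≤ p x + p y := fun x y => N.add_le b 0 x y
  have hpsmul : ∀ (α : ℝ) (x : X), p (α • x) = |α| * p x := by
    intro α x
    have h := N.smul_eq α (Function.update b 0 x) 0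
    simpa [Function.update_idem, bsem, hp] using h
  have hp0 : p 0 = 0 := by
    have := hpsmul 0 0
    simpa using this
  have hpneg : ∀ x, p (-x) = p x := by
    intro x
    have := hpsmul (-1) x
    simpa using this
  have hpnonneg : ∀ x, 0 ≤ p x := by
    intro x
    have h1 := hpadd x (-x)
    rw [add_neg_cancel, hp0, hpneg] at h1
    linarith
  -- the infimum set
  have hSbdd : BddBelow ((fun w => bsem N b (x₀ - w)) '' (W : Set X)) :=
    ⟨0, by rintro r ⟨w, _, rfl⟩; exact hpnonneg _⟩
  have hSne : ((fun w => bsem N b (x₀ - w)) '' (W : Set X)).Nonempty :=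
    ⟨_, ⟨0, W.zero_mem, rfl⟩⟩
  have hdle : ∀ w ∈ W, d ≤ p (x₀ - w) := by
    intro w hw
    rw [hdinf]
    exact csInf_le hSbdd ⟨w, hw, rfl⟩
  have hx₀W : x₀ ∉ W := by
    intro h
    have := hdle x₀ h
    rw [sub_self, hp0] at this
    linarith
  -- partial linear map: 0 on W, 1 on x₀
  set f₀ : X →ₗ.[ℝ] ℝ := ⟨W, 0⟩ with hf₀
  have hx₀f : x₀ ∉ f₀.domain := hx₀W
  set f := f₀.supSpanSingleton x₀ 1 hx₀f with hf
  -- key estimate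
  have hkey : ∀ w ∈ W, ∀ t : ℝ, |t| * d ≤ p (w + t • x₀) := by
    intro w hw t
    rcases eq_or_ne t 0 with rfl | ht
    · simpa using hpnonneg w
    · have h1 : w + t • x₀ = t • (x₀ - (-(t⁻¹ • w))) := by
        rw [smul_sub, smul_neg, smul_smul, mul_inv_cancel₀ ht, one_smul]
        abel
      rw [h1, hpsmul]
      exact mul_le_mul_of_nonneg_left
        (hdle _ (W.neg_mem (W.smul_mem _ hw))) (abs_nonneg t)
  have hQhom : ∀ c : ℝ, 0 < c → ∀ x, d⁻¹ * p (c • x) = c * (d⁻¹ * p x) := by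
    intro c hc x
    rw [hpsmul, abs_of_pos hc]; ring
  have hQadd : ∀ x y, d⁻¹ * p (x + y) ≤ d⁻¹ * p x + d⁻¹ * p y := by
    intro x y
    rw [← mul_add]
    exact mul_le_mul_of_nonneg_left (hpadd x y) (inv_nonneg.mpr hd.le)
  have hD : f.domain = f₀.domain ⊔ (ℝ ∙ x₀) :=
    LinearPMap.domain_supSpanSingleton f₀ x₀ 1 hx₀f
  have hfle : ∀ z : f.domain, f z ≤ d⁻¹ * p z := by
    rintro ⟨z, hz⟩
    have hz' : z ∈ f₀.domain ⊔ (ℝ ∙ x₀) := by rw [← hD]; exact hz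
    obtain ⟨w, hw, z', hzspan, rfl⟩ := Submodule.mem_sup.mp hz'
    obtain ⟨t, rfl⟩ := Submodule.mem_span_singleton.mp hzspan
    have happ : f ⟨w + t • x₀, hz⟩ = t := by
      have h := LinearPMap.supSpanSingleton_apply_mk f₀ x₀ 1 hx₀f w hw t
      have h0 : f₀ ⟨w, hw⟩ = 0 := rfl
      rw [h0, zero_add, smul_eq_mul, mul_one] at h
      exact h
    rw [happ]
    have h2 := hkey w hw t
    have h3 : t ≤ |t| := le_abs_self t
    have h4 : |t| ≤ d⁻¹ * p (w + t • x₀) := by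
      rw [le_inv_mul_iff₀ hd, mul_comm]
      exact h2
    linarith
  obtain ⟨g, hgext, hgle⟩ := exists_extension_of_le_sublinear f (fun x => d⁻¹ * p x)
    hQhom hQadd hfle
  have hgabs : ∀ x, |g x| ≤ d⁻¹ * p x := by
    intro x
    rw [abs_le]
    constructor
    · have := hgle (-x)
      rw [map_neg, hpneg] at this
      linarith
    · exact hgle x
  -- values of g
  have hgW : ∀ w ∈ W, g w = 0 := by
    intro w hw
    have hmem : w + (0 : ℝ) • x₀ ∈ f.domain := by
      rw [hD]
      exact Submodule.mem_sup.mpr ⟨w, hw, (0:ℝ) • x₀,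
        Submodule.mem_span_singleton.mpr ⟨0, rfl⟩, rfl⟩
    have h := hgext ⟨w + (0:ℝ) • x₀, hmem⟩
    have h' := LinearPMap.supSpanSingleton_apply_mk f₀ x₀ 1 hx₀f w hw 0
    have h0 : f₀ ⟨w, hw⟩ = 0 := rfl
    have h2 : g (w + (0:ℝ) • x₀) = f₀ ⟨w, hw⟩ + (0:ℝ) • 1 := h.trans h'
    simpa [h0] using h2
  have hgx₀ : g x₀ = 1 := by
    have hmem : (0 : X) + (1 : ℝ) • x₀ ∈ f.domain := by
      rw [hD]
      exact Submodule.mem_sup.mpr ⟨0, W.zero_mem, (1:ℝ) • x₀,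
        Submodule.mem_span_singleton.mpr ⟨1, rfl⟩, rfl⟩
    have h := hgext ⟨(0:X) + (1:ℝ) • x₀, hmem⟩
    have h' := LinearPMap.supSpanSingleton_apply_mk f₀ x₀ 1 hx₀f 0 W.zero_mem 1
    have h0 : f₀ ⟨0, W.zero_mem⟩ = 0 := rfl
    have h2 : g ((0:X) + (1:ℝ) • x₀) = f₀ ⟨0, W.zero_mem⟩ + (1:ℝ) • 1 := h.trans h'
    simpa [h0] using h2
  refine ⟨g, ⟨⟨fun x y => map_add g x y, fun k x => by
      rw [map_smul, smul_eq_mul]⟩,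
    d⁻¹, inv_pos.mpr hd, hgabs⟩, hgx₀, hgW, ?_⟩
  -- norm computation
  have hleast : IsLeast {M : ℝ | 0 < M ∧ ∀ x : X, |g x| ≤ M * p x} (1 / d) := by
    constructor
    · exact ⟨by positivity, by rw [one_div]; exact hgabs⟩
    · rintro M ⟨hM, hMb⟩
      have hinv : ∀ w ∈ W, M⁻¹ ≤ p (x₀ - w) := by
        intro w hw
        have h1 : g (x₀ - w) = 1 := by
          rw [map_sub, hgx₀, hgW w hw, sub_zero]
        have h2 := hMb (x₀ - w)
        rw [h1, abs_one] at h2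
        rw [inv_le_iff_one_le_mul₀' hM]
        linarith [h2, mul_comm M (p (x₀ - w))]
      have hMd : M⁻¹ ≤ d := by
        rw [hdinf]
        exact le_csInf hSne (by rintro r ⟨w, hw, rfl⟩; exact hinv w hw)
      rw [one_div]
      rw [inv_le_comm₀ hd hM]
      exact hMd
  exact hleast.csInf_eq
end

section
/- Let X be a real linear n-normed space. For each x ∈ X define φ_{(x,F)} : X*_F → ℝ by φ_{(x,F)}(T) = T(x, b₂, ..., bₙ). Then φ_{(x,F)} is a bounded linear functional on X*_F, and ‖φ_{(x,F)}‖ = ‖x, b₂, ..., bₙ‖. -/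
open Function Filter Topology

variable {n : ℕ} {X : Type*} [AddCommGroup X] [Module ℝ X]

section AuxLemmas

lemma bsem_zero (N : NNorm (n + 1) X) (b : Fin (n + 1) → X) : bsem N b 0 = 0 := by
  rw [bsem, N.eq_zero_iff]
  intro h
  exact h.ne_zero 0 (by simp)

lemma bsem_smul (N : NNorm (n + 1) X) (b : Fin (n + 1) → X) (c : ℝ) (x : X) :
    bsem N b (c • x) = |c| * bsem N b x := by
  have h := N.smul_eq c (Function.update b 0 x) 0
  simpa [bsem, Function.update_idem] using h

lemma bsem_add (N : NNorm (n + 1) X) (b : Fin (n + 1) → X) (x y : X) :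
    bsem N b (x + y) ≤ bsem N b x + bsem N b y :=
  N.add_le b 0 x y

lemma bsem_neg (N : NNorm (n + 1) X) (b : Fin (n + 1) → X) (x : X) :
    bsem N b (-x) = bsem N b x := by
  have := bsem_smul N b (-1) x
  simpa using this

lemma bsem_nonneg (N : NNorm (n + 1) X) (b : Fin (n + 1) → X) (x : X) :
    0 ≤ bsem N b x := by
  have h1 := bsem_add N b x (-x)
  have h2 := bsem_neg N b x
  have h0 : bsem N b (x + -x) = 0 := by
    rw [add_neg_cancel, bsem_zero]
  linarith

lemma abs_le_mul_bnorm (N : NNorm (n + 1) X) (b : Fin (n + 1) → X) (x : X)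
    (T : X → ℝ) (hT : IsBddBLinear N b T) :
    |T x| ≤ bsem N b x * bnorm N b T := by
  obtain ⟨hlin, M, hM, hMle⟩ := hT
  have hne : {M : ℝ | 0 < M ∧ ∀ y : X, |T y| ≤ M * bsem N b y}.Nonempty := ⟨M, hM, hMle⟩
  have hbdd : BddBelow {M : ℝ | 0 < M ∧ ∀ y : X, |T y| ≤ M * bsem N b y} :=
    ⟨0, fun m hm => hm.1.le⟩
  have hpx : 0 ≤ bsem N b x := bsem_nonneg N b x
  have hbn : bnorm N b T = sInf {M : ℝ | 0 < M ∧ ∀ y : X, |T y| ≤ M * bsem N b y} := rfl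
  rcases eq_or_lt_of_le hpx with h0 | h0
  · have hTx0 : |T x| ≤ 0 := by
      have := hMle x
      rw [← h0, mul_zero] at this
      exact this
    rw [← h0, zero_mul]
    exact hTx0
  · have hlow : |T x| / bsem N b x ≤ sInf {M : ℝ | 0 < M ∧ ∀ y : X, |T y| ≤ M * bsem N b y} := by
      refine le_csInf hne fun m hm => ?_
      rw [div_le_iff₀ h0]
      have := hm.2 x
      linarith
    rw [hbn]
    calc |T x| = |T x| / bsem N b x * bsem N b x := by field_simp
    _ ≤ sInf {M : ℝ | 0 < M ∧ ∀ y : X, |T y| ≤ M * bsem N b y} * bsem N b x :=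
        mul_le_mul_of_nonneg_right hlow hpx
    _ = bsem N b x * sInf {M : ℝ | 0 < M ∧ ∀ y : X, |T y| ≤ M * bsem N b y} := mul_comm _ _

lemma zero_isBddBLinear (N : NNorm (n + 1) X) (b : Fin (n + 1) → X) :
    IsBddBLinear N b (fun _ => (0 : ℝ)) :=
  ⟨⟨fun _ _ => by simp, fun _ _ => by simp⟩, 1, one_pos,
    fun y => by simpa using bsem_nonneg N b y⟩

lemma bnorm_le_one_of (N : NNorm (n + 1) X) (b : Fin (n + 1) → X) (T : X → ℝ)
    (h : ∀ y : X, |T y| ≤ bsem N b y) : bnorm N b T ≤ 1 := by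
  have hbdd : BddBelow {M : ℝ | 0 < M ∧ ∀ y : X, |T y| ≤ M * bsem N b y} :=
    ⟨0, fun m hm => hm.1.le⟩
  exact csInf_le hbdd ⟨one_pos, fun y => by simpa using h y⟩

end AuxLemmas

theorem stmt6 (N : NNorm (n + 1) X) (b : Fin (n + 1) → X)
    (hdim : ↑(n + 1) ≤ Module.rank ℝ X) (x : X) :
    (∀ (T S : X → ℝ) (α β : ℝ), (α • T + β • S) x = α * T x + β * S x) ∧
    (∀ T : X → ℝ, IsBddBLinear N b T → |T x| ≤ bsem N b x * bnorm N b T) ∧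
    sSup {r : ℝ | ∃ T : X → ℝ, IsBddBLinear N b T ∧ bnorm N b T ≤ 1 ∧ r = |T x|} =
      bsem N b x := by
  classical
  have hpx : 0 ≤ bsem N b x := bsem_nonneg N b x
  refine ⟨fun T S α β => by simp [mul_comm], fun T hT => abs_le_mul_bnorm N b x T hT, ?_⟩
  set R := {r : ℝ | ∃ T : X → ℝ, IsBddBLinear N b T ∧ bnorm N b T ≤ 1 ∧ r = |T x|} with hR
  have hub : ∀ r ∈ R, r ≤ bsem N b x := by
    rintro r ⟨T, hT, h1, rfl⟩
    calc |T x| ≤ bsem N b x * bnorm N b T := abs_le_mul_bnorm N b x T hT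
    _ ≤ bsem N b x * 1 := mul_le_mul_of_nonneg_left h1 hpx
    _ = bsem N b x := mul_one _
  have h0mem : (0 : ℝ) ∈ R := by
    refine ⟨fun _ => 0, zero_isBddBLinear N b, bnorm_le_one_of N b _ ?_, by simp⟩
    intro y; simpa using bsem_nonneg N b y
  have hne : R.Nonempty := ⟨0, h0mem⟩
  have hbdd : BddAbove R := ⟨bsem N b x, hub⟩
  refine le_antisymm (csSup_le hne hub) ?_
  rcases eq_or_lt_of_le hpx with h0 | h0
  · rw [← h0]
    exact le_csSup hbdd h0mem
  · -- Hahn-Banach: build a functional attaining the seminorm at x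
    have hx0 : x ≠ 0 := by
      intro h
      rw [h, bsem_zero] at h0
      exact lt_irrefl _ h0
    set f : X →ₗ.[ℝ] ℝ := LinearPMap.mkSpanSingleton x (bsem N b x) hx0 with hf
    have hfx : f ⟨x, Submodule.mem_span_singleton_self x⟩ = bsem N b x :=
      LinearPMap.mkSpanSingleton_apply ℝ ℝ hx0 (bsem N b x)
    have hfdom : f.domain = Submodule.span ℝ {x} := rfl
    have hfle : ∀ z : f.domain, f z ≤ bsem N b z := by
      rintro ⟨z, hz⟩
      rw [hfdom] at hz
      obtain ⟨c, rfl⟩ := Submodule.mem_span_singleton.1 hz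
      have hzz : (⟨c • x, hz⟩ : f.domain)
          = c • (⟨x, Submodule.mem_span_singleton_self x⟩ : f.domain) := rfl
      rw [hzz, f.map_smul, hfx]
      have : c • bsem N b x ≤ |c| * bsem N b x := by
        rw [smul_eq_mul]
        exact mul_le_mul_of_nonneg_right (le_abs_self c) hpx
      calc c • bsem N b x ≤ |c| * bsem N b x := this
      _ = bsem N b (c • x) := (bsem_smul N b c x).symm
    obtain ⟨g, hg, hgle⟩ := exists_extension_of_le_sublinear f (bsem N b)
      (fun c hc y => by rw [bsem_smul, abs_of_pos hc]) (bsem_add N b) hfle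
    have hgx : g x = bsem N b x := by
      have := hg ⟨x, Submodule.mem_span_singleton_self x⟩
      rw [hfx] at this
      exact this
    have habs : ∀ y : X, |g y| ≤ bsem N b y := by
      intro y
      rw [abs_le]
      constructor
      · have := hgle (-y)
        rw [map_neg, bsem_neg] at this
        linarith
      · exact hgle y
    have hmem : bsem N b x ∈ R := by
      refine ⟨fun y => g y, ⟨⟨fun a b' => g.map_add a b', fun k a => by
        simp [g.map_smul]⟩, 1, one_pos, fun y => by simpa using habs y⟩,
        bnorm_le_one_of N b _ habs, ?_⟩
      simp only []
      rw [hgx, abs_of_nonneg hpx]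
    exact le_csSup hbdd hmem
end
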